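/- Let K be a field equipped with a nonarchimedean absolute value |·|_v, let d ≥ 2 be an integer, and let α, β ∈ K with |α|_v = |β|_v > 1 and |β^d − α^d|_v > |α|_v. Set λ₀ = −α^d. Then the sequence n ↦ log⁺|f_{λ₀}^n(α)|_v / d^n converges to (log|α|_v)/d, the sequence n ↦ log⁺|f_{λ₀}^n(β)|_v / d^n converges to (log|β^d − α^d|_v)/d, and these two limits are distinct. -/

import Mathlib

open Filter

lemma nonarch_add_eq_aux {K : Type*} [Field K] (v : AbsoluteValue K ℝ)
    (hv : IsNonarchimedean v) {a b : K} (h : v b < v a) : v (a + b) = v a := by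
  refine le_antisymm ((hv a b).trans_eq (max_eq_left h.le)) ?_
  by_contra hlt
  push_neg at hlt
  have h2 := hv (a + b) (-b)
  simp only [add_neg_cancel_right, v.map_neg] at h2
  have : v a ≤ max (v (a + b)) (v b) := h2
  rcases max_cases (v (a + b)) (v b) with ⟨he, _⟩ | ⟨he, _⟩ <;> rw [he] at this <;> linarith

/-- Suppose `|α|_v = |β|_v > 1` and `|β^d - α^d|_v > |α|_v` for a nonarchimedean
absolute value. With `λ₀ = -α^d`, the local canonical height of `α` at `v` equals
`(log|α|_v)/d`, that of `β` equals `(log|β^d - α^d|_v)/d`, and these two values differ. -/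
theorem local_heights_differ_of_large_difference
    (K : Type*) [Field K] (v : AbsoluteValue K ℝ) (hv : IsNonarchimedean v)
    (d : ℕ) (hd : 2 ≤ d) (α β : K)
    (heq : v α = v β) (hbig : 1 < v α)
    (hdiff : v (β ^ d - α ^ d) > v α) :
    Tendsto (fun n : ℕ =>
        Real.log (max (v ((fun x : K => x ^ d + (-α ^ d))^[n] α)) 1) / (d : ℝ) ^ n)
      atTop (nhds (Real.log (v α) / d)) ∧
    Tendsto (fun n : ℕ =>
        Real.log (max (v ((fun x : K => x ^ d + (-α ^ d))^[n] β)) 1) / (d : ℝ) ^ n)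
      atTop (nhds (Real.log (v (β ^ d - α ^ d)) / d)) ∧
    Real.log (v α) / d ≠ Real.log (v (β ^ d - α ^ d)) / d := by
  set g : K → K := fun x => x ^ d + (-α ^ d) with hg
  have hd0 : d ≠ 0 := by omega
  have hdR : (0:ℝ) < (d:ℝ) := by positivity
  have hα0 : (0:ℝ) < v α := lt_trans one_pos hbig
  set B : ℝ := v (β ^ d - α ^ d) with hB
  have hB1 : 1 < B := lt_trans hbig hdiff
  have hgrow : ∀ x : K, v α < v x → v (g x) = v x ^ d := by
    intro x hx
    have h1 : v (-α ^ d) < v (x ^ d) := by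
      rw [v.map_neg, v.map_pow, v.map_pow]
      exact pow_lt_pow_left₀ hx (v.nonneg α) hd0
    rw [hg]
    simpa [v.map_pow] using nonarch_add_eq_aux v hv h1
  -- iterates of α
  have hα2 : ∀ k : ℕ, v (g^[k + 2] α) = v α ^ d ^ (k + 1) := by
    intro k
    induction k with
    | zero =>
      have h1 : g α = 0 := by simp [hg]
      have h2 : g^[2] α = -α ^ d := by
        rw [show (2:ℕ) = 1 + 1 from rfl, Function.iterate_add_apply,
          Function.iterate_one, h1]
        simp [hg, zero_pow hd0]
      rw [h2, v.map_neg, v.map_pow, pow_one]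
    | succ k ih =>
      have hx : v α < v (g^[k + 2] α) := by
        rw [ih]
        calc v α = v α ^ 1 := (pow_one _).symm
          _ < v α ^ d ^ (k + 1) := by
            apply pow_lt_pow_right₀ hbig
            exact Nat.one_lt_pow (by omega) (by omega)
      have : g^[k + 1 + 2] α = g (g^[k + 2] α) := by
        rw [show k + 1 + 2 = (k + 2) + 1 by ring, Function.iterate_succ_apply']
      rw [this, hgrow _ hx, ih, ← pow_mul, ← pow_succ]
  -- iterates of β
  have hβ1 : ∀ k : ℕ, v (g^[k + 1] β) = B ^ d ^ k := by
    intro k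
    induction k with
    | zero =>
      simp [hg, hB, Function.iterate_one, sub_eq_add_neg]
    | succ k ih =>
      have hx : v α < v (g^[k + 1] β) := by
        rw [ih]
        calc v α < B := hdiff
          _ = B ^ 1 := (pow_one _).symm
          _ ≤ B ^ d ^ k := pow_le_pow_right₀ hB1.le (Nat.one_le_pow _ _ (by omega))
      rw [show k + 1 + 1 = (k + 1) + 1 from rfl, Function.iterate_succ_apply',
        hgrow _ hx, ih, ← pow_mul, ← pow_succ]
  refine ⟨?_, ?_, ?_⟩
  · apply Tendsto.congr' _ (tendsto_const_nhds (x := Real.log (v α) / d))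
    rw [EventuallyEq, eventually_atTop]
    refine ⟨2, fun n hn => ?_⟩
    obtain ⟨k, rfl⟩ := Nat.exists_eq_add_of_le hn
    have hval := hα2 k
    rw [show 2 + k = k + 2 by ring] at *
    have hgt1 : (1:ℝ) < v α ^ d ^ (k + 1) := one_lt_pow₀ hbig (by positivity)
    rw [hval, max_eq_left hgt1.le, Real.log_pow]
    have : ((d:ℝ) ^ (k + 2)) = (d:ℝ) ^ (k + 1) * d := by ring
    rw [this]
    push_cast
    field_simp
  · apply Tendsto.congr' _ (tendsto_const_nhds (x := Real.log B / d))
    rw [EventuallyEq, eventually_atTop]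
    refine ⟨1, fun n hn => ?_⟩
    obtain ⟨k, rfl⟩ := Nat.exists_eq_add_of_le hn
    have hval := hβ1 k
    rw [show 1 + k = k + 1 by ring] at *
    have hgt1 : (1:ℝ) < B ^ d ^ k := one_lt_pow₀ hB1 (by positivity)
    rw [hval, max_eq_left hgt1.le, Real.log_pow]
    have : ((d:ℝ) ^ (k + 1)) = (d:ℝ) ^ k * d := by ring
    rw [this]
    push_cast
    field_simp
  · have hlog : Real.log (v α) < Real.log B := Real.log_lt_log hα0 hdiff
    exact ne_of_lt (by gcongr)
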